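/- arXiv:1812.02107 — 2 statements merged into one kernel-verified Lean document; each statement's English description precedes it below -/
import Mathlib

section
/- For every integer n ≥ 2 and every integer k with 2 ≤ k ≤ F_{n−1}, one has Z(F_n + k) − Z(F_n + k − 1) = Z(k) − Z(k − 1), where F_m denotes the m-th Fibonacci number. -/
/-- A natural number is *fibbinary* if its binary representation
contains no two consecutive ones. -/
def IsFibbinary (m : ℕ) : Prop :=
  ∀ i : ℕ, ¬(m.testBit i = true ∧ m.testBit (i + 1) = true)

instance : DecidablePred IsFibbinary := fun m =>
  decidable_of_iff (m &&& (2 * m) = 0) (by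
    constructor
    · intro h i hi
      have hb : (m &&& 2 * m).testBit (i+1) = true := by
        rw [Nat.testBit_and]
        have h2 : (2 * m).testBit (i+1) = m.testBit i := by
          rw [Nat.testBit_add_one]
          congr 1
          omega
        rw [h2, hi.1, hi.2]; rfl
      rw [h, Nat.zero_testBit] at hb
      exact Bool.false_ne_true hb
    · intro h
      apply Nat.eq_of_testBit_eq
      intro j
      rw [Nat.zero_testBit, Nat.testBit_and]
      cases j with
      | zero =>
        have : (2 * m).testBit 0 = false := by
          simp [Nat.testBit_zero, Nat.mul_mod_right]
        simp [this]
      | succ i =>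
        have h2 : (2 * m).testBit (i+1) = m.testBit i := by
          rw [Nat.testBit_add_one]; congr 1; omega
        rw [h2]
        by_cases h1 : m.testBit (i+1) = true
        · by_cases h0 : m.testBit i = true
          · exact absurd ⟨h0, h1⟩ (h i)
          · simp [Bool.not_eq_true] at h0; simp [h0]
        · simp [Bool.not_eq_true] at h1; simp [h1])

lemma fb_zero : IsFibbinary 0 := by intro i; simp [Nat.zero_testBit]

lemma fb_pow (k : ℕ) : IsFibbinary (2 ^ k) := by
  intro i hi
  rcases hi with ⟨h1, h2⟩
  rw [Nat.testBit_two_pow] at h1 h2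
  simp at h1 h2
  omega

lemma testBit_pow_add {m q : ℕ} (h : q < 2 ^ m) (j : ℕ) :
    (2 ^ m + q).testBit j = if j < m then q.testBit j else decide (j = m) := by
  have := Nat.testBit_two_pow_mul_add 1 h j
  rw [mul_one] at this
  rw [this]
  by_cases hj : j < m
  · simp [hj]
  · simp only [hj, if_false]
    rcases Nat.lt_or_ge m j with hlt | hge
    · have h1 : Nat.testBit 1 (j - m) = false :=
        Nat.testBit_lt_two_pow (by
          have : 1 ≤ j - m := by omega
          calc 1 < 2 ^ 1 := by norm_num
          _ ≤ 2 ^ (j - m) := Nat.pow_le_pow_right (by norm_num) this)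
      rw [h1]; simp; omega
    · have : j = m := by omega
      subst this
      simp

lemma fb_shift {m q : ℕ} (h : q < 2 ^ m) :
    IsFibbinary (2 ^ (m + 1) + q) ↔ IsFibbinary q := by
  have hq : q < 2 ^ (m + 1) := lt_of_lt_of_le h (Nat.pow_le_pow_right (by norm_num) (by omega))
  have hbit : ∀ j, j ≥ m → q.testBit j = false := fun j hj =>
    Nat.testBit_lt_two_pow (lt_of_lt_of_le h (Nat.pow_le_pow_right (by norm_num) hj))
  constructor
  · intro hf i hi
    apply hf i
    rw [testBit_pow_add hq, testBit_pow_add hq]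
    by_cases h1 : i + 1 < m + 1
    · have h0 : i < m + 1 := by omega
      simp [h0, h1, hi.1, hi.2]
    · exfalso
      have := hbit (i+1) (by omega)
      rw [this] at hi
      exact Bool.false_ne_true hi.2
  · intro hf i hi
    rw [testBit_pow_add hq, testBit_pow_add hq] at hi
    by_cases h1 : i + 1 < m + 1
    · have h0 : i < m + 1 := by omega
      simp [h0, h1] at hi
      exact hf i hi
    · by_cases h0 : i < m + 1
      · -- i + 1 = m + 1 or i + 1 > m + 1; with i < m+1, i+1 = m+1, so i = m
        have := hi.1
        rw [if_pos (by omega : i < m + 1), hbit i (by omega)] at this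
        exact Bool.false_ne_true this
      · have ha := hi.1
        rw [if_neg h0] at ha
        have hb := hi.2
        rw [if_neg (by omega : ¬ i + 1 < m + 1)] at hb
        simp only [decide_eq_true_eq] at ha hb
        omega

lemma fb_four {q : ℕ} : IsFibbinary (4 * q + 1) ↔ IsFibbinary q := by
  have h1 : (1 : ℕ) < 2 ^ 2 := by norm_num
  have key : ∀ j, (4 * q + 1).testBit j = if j < 2 then Nat.testBit 1 j else q.testBit (j - 2) := by
    intro j
    have := Nat.testBit_two_pow_mul_add q h1 j
    have h4 : 2 ^ 2 * q + 1 = 4 * q + 1 := by ring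
    rw [h4] at this
    exact this
  constructor
  · intro hf i hi
    apply hf (i + 2)
    rw [key, key]
    have e1 : i + 2 - 2 = i := by omega
    have e2 : i + 2 + 1 - 2 = i + 1 := by omega
    simp only [show ¬(i + 2 < 2) by omega, show ¬(i + 2 + 1 < 2) by omega, if_false, e1, e2]
    exact hi
  · intro hf i hi
    rw [key, key] at hi
    by_cases h2 : i + 1 < 2
    · -- i = 0 : testBit 1 0 ∧ testBit 1 1
      have : i = 0 := by omega
      subst this
      have := hi.2
      rw [if_pos (by norm_num)] at this
      exact absurd this (by decide)
    · by_cases h0 : i < 2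
      · have : i = 1 := by omega
        subst this
        have := hi.1
        rw [if_pos (by norm_num)] at this
        exact absurd this (by decide)
      · simp only [h0, h2, if_false] at hi
        exact hf (i - 2) (by
          have e : i - 2 + 1 = i + 1 - 2 := by omega
          rw [e]; exact hi)

lemma odd_fb_iff {x : ℕ} : (Odd x ∧ IsFibbinary x) ↔ ∃ q, IsFibbinary q ∧ x = 4 * q + 1 := by
  constructor
  · rintro ⟨hodd, hfb⟩
    have h0 : x % 2 = 1 := Nat.odd_iff.mp hodd
    have hb0 : x.testBit 0 = true := by simp [Nat.testBit_zero, h0]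
    have hb1 : x.testBit 1 = false := by
      by_contra hb
      simp only [Bool.not_eq_false] at hb
      exact hfb 0 ⟨hb0, hb⟩
    have h2 : x / 2 % 2 = 0 := by
      rw [Nat.testBit_add_one, Nat.testBit_zero] at hb1
      simpa using hb1
    have hx4 : x % 4 = 1 := by omega
    refine ⟨x / 4, ?_, by omega⟩
    rw [← fb_four]
    have : 4 * (x / 4) + 1 = x := by omega
    rwa [this]
  · rintro ⟨q, hq, rfl⟩
    exact ⟨⟨2 * q, by ring⟩, fb_four.mpr hq⟩

lemma count_add_of (m : ℕ) : ∀ t, t ≤ 2 ^ m →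
    Nat.count IsFibbinary (2 ^ (m + 1) + t)
      = Nat.count IsFibbinary (2 ^ (m + 1)) + Nat.count IsFibbinary t
  | 0, _ => by simp
  | (t + 1), ht => by
    have ht' : t ≤ 2 ^ m := by omega
    have e : 2 ^ (m + 1) + (t + 1) = (2 ^ (m + 1) + t) + 1 := by ring
    rw [e, Nat.count_succ, Nat.count_succ, count_add_of m t ht']
    have : IsFibbinary (2 ^ (m + 1) + t) ↔ IsFibbinary t := fb_shift (by omega)
    by_cases h : IsFibbinary t
    · rw [if_pos h, if_pos (this.mpr h)]; ring
    · rw [if_neg h, if_neg (fun hc => h (this.mp hc))]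
      ring

lemma count_top (m : ℕ) : ∀ s, s ≤ 2 ^ m →
    Nat.count IsFibbinary (2 ^ (m + 1) + 2 ^ m + s)
      = Nat.count IsFibbinary (2 ^ (m + 1) + 2 ^ m)
  | 0, _ => by simp
  | (s + 1), hs => by
    have hs' : s ≤ 2 ^ m := by omega
    have e : 2 ^ (m + 1) + 2 ^ m + (s + 1) = (2 ^ (m + 1) + 2 ^ m + s) + 1 := by ring
    rw [e, Nat.count_succ, count_top m s hs']
    have hnot : ¬ IsFibbinary (2 ^ (m + 1) + 2 ^ m + s) := by
      intro hf
      have hlt : 2 ^ m + s < 2 ^ (m + 1) := by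
        have : 2 ^ (m+1) = 2 ^ m + 2 ^ m := by ring
        omega
      apply hf m
      constructor
      · rw [show 2 ^ (m+1) + 2 ^ m + s = 2 ^ (m+1) + (2 ^ m + s) by ring,
          testBit_pow_add hlt, if_pos (Nat.lt_succ_self m),
          testBit_pow_add (by omega : s < 2 ^ m), if_neg (lt_irrefl m)]
        simp
      · rw [show 2 ^ (m+1) + 2 ^ m + s = 2 ^ (m+1) + (2 ^ m + s) by ring,
          testBit_pow_add hlt, if_neg (lt_irrefl (m+1))]
        simp
    rw [if_neg hnot]
    ring

lemma count_pow : ∀ m, Nat.count IsFibbinary (2 ^ m) = Nat.fib (m + 2)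
  | 0 => by decide
  | 1 => by decide
  | (m + 2) => by
    have e : (2 : ℕ) ^ (m + 2) = 2 ^ (m + 1) + 2 ^ m + 2 ^ m := by ring
    rw [e, count_top m (2 ^ m) le_rfl, count_add_of m (2 ^ m) le_rfl,
      count_pow (m + 1), count_pow m]
    have h4 : Nat.fib (m + 2 + 2) = Nat.fib (m + 2) + Nat.fib (m + 2 + 1) := Nat.fib_add_two
    have h3 : Nat.fib (m + 1 + 2) = Nat.fib (m + 2 + 1) := by rw [show m + 1 + 2 = m + 2 + 1 by omega]
    omega

lemma Qinf : {m | IsFibbinary m}.Infinite :=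
  Set.infinite_of_injective_forall_mem
    (f := fun k : ℕ => 2 ^ k)
    (fun a b h => Nat.pow_right_injective le_rfl h) (fun k => fb_pow k)

lemma Pinf : {m | 0 < m ∧ IsFibbinary m}.Infinite :=
  Set.infinite_of_injective_forall_mem
    (f := fun k : ℕ => 2 ^ k)
    (fun a b h => Nat.pow_right_injective le_rfl h)
    (fun k => ⟨pow_pos (by norm_num) k, fb_pow k⟩)

lemma Rinf : {m | Odd m ∧ IsFibbinary m}.Infinite :=
  Set.infinite_of_injective_forall_mem
    (f := fun k : ℕ => 4 * 2 ^ k + 1)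
    (fun a b h => by
      have h' : 4 * 2 ^ a + 1 = 4 * 2 ^ b + 1 := h
      have h2 : (2:ℕ) ^ a = 2 ^ b := by omega
      exact Nat.pow_right_injective le_rfl h2)
    (fun k => ⟨⟨2 * 2 ^ k, by ring⟩, fb_four.mpr (fb_pow k)⟩)

lemma count_R (t : ℕ) :
    Nat.count (fun m => Odd m ∧ IsFibbinary m) (4 * t + 1) = Nat.count IsFibbinary t := by
  rw [Nat.count_eq_card_filter_range, Nat.count_eq_card_filter_range]
  have hset : (Finset.range (4 * t + 1)).filter (fun m => Odd m ∧ IsFibbinary m)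
      = ((Finset.range t).filter IsFibbinary).image (fun q => 4 * q + 1) := by
    ext x
    simp only [Finset.mem_filter, Finset.mem_range, Finset.mem_image]
    constructor
    · rintro ⟨hx, hr⟩
      obtain ⟨q, hq, rfl⟩ := odd_fb_iff.mp hr
      exact ⟨q, ⟨by omega, hq⟩, rfl⟩
    · rintro ⟨q, ⟨hq1, hq2⟩, rfl⟩
      exact ⟨by omega, odd_fb_iff.mpr ⟨q, hq2, rfl⟩⟩
  rw [hset, Finset.card_image_of_injective _ (fun a b h => by omega)]

lemma nth_R (j : ℕ) :
    Nat.nth (fun m => Odd m ∧ IsFibbinary m) j = 4 * Nat.nth IsFibbinary j + 1 := by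
  have hq := Nat.nth_mem_of_infinite Qinf j
  have hr : Odd (4 * Nat.nth IsFibbinary j + 1) ∧ IsFibbinary (4 * Nat.nth IsFibbinary j + 1) :=
    ⟨⟨2 * Nat.nth IsFibbinary j, by ring⟩, fb_four.mpr hq⟩
  have h := Nat.nth_count (p := fun m => Odd m ∧ IsFibbinary m) hr
  rwa [count_R, Nat.count_nth_of_infinite Qinf] at h

lemma count_P : ∀ x, 1 ≤ x →
    Nat.count (fun m => 0 < m ∧ IsFibbinary m) x + 1 = Nat.count IsFibbinary x
  | 1, _ => by
      rw [Nat.count_succ, Nat.count_succ, Nat.count_zero, Nat.count_zero]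
      rw [if_neg (by simp), if_pos fb_zero]
  | (x + 2), _ => by
      rw [Nat.count_succ (p := fun m => 0 < m ∧ IsFibbinary m) (n := x + 1),
        Nat.count_succ (p := IsFibbinary) (n := x + 1),
        ← count_P (x + 1) (by omega)]
      by_cases h : IsFibbinary (x + 1)
      · rw [if_pos (⟨by omega, h⟩ : 0 < x + 1 ∧ IsFibbinary (x + 1)), if_pos h]
      · rw [if_neg (fun hc => h hc.2), if_neg h]

lemma nth_Q_zero : Nat.nth IsFibbinary 0 = 0 := by
  rw [Nat.nth_zero]
  exact Nat.sInf_eq_zero.mpr (Or.inl fb_zero)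

lemma nth_P (i : ℕ) :
    Nat.nth (fun m => 0 < m ∧ IsFibbinary m) i = Nat.nth IsFibbinary (i + 1) := by
  set y := Nat.nth IsFibbinary (i + 1) with hy
  have hyfb : IsFibbinary y := Nat.nth_mem_of_infinite Qinf _
  have hpos : 0 < y := by
    have h0 : Nat.nth IsFibbinary 0 < y := (Nat.nth_lt_nth Qinf).mpr (by omega)
    rw [nth_Q_zero] at h0
    exact h0
  have hcy : Nat.count IsFibbinary y = i + 1 := Nat.count_nth_of_infinite Qinf _
  have hcp := count_P y hpos
  have h := Nat.nth_count (p := fun m => 0 < m ∧ IsFibbinary m) ⟨hpos, hyfb⟩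
  rwa [show Nat.count (fun m => 0 < m ∧ IsFibbinary m) y = i by omega] at h

lemma nth_Q_lt_of_count {i x : ℕ} (h : i < Nat.count IsFibbinary x) :
    Nat.nth IsFibbinary i < x := by
  by_contra hle
  push_neg at hle
  have hm := Nat.count_monotone IsFibbinary hle
  rw [Nat.count_nth_of_infinite Qinf] at hm
  omega

lemma nth_Q_shift (s i : ℕ) (hi : i < Nat.fib (s + 2)) :
    Nat.nth IsFibbinary (Nat.fib (s + 3) + i) = 2 ^ (s + 1) + Nat.nth IsFibbinary i := by
  have htlt : Nat.nth IsFibbinary i < 2 ^ s :=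
    nth_Q_lt_of_count (by rw [count_pow s]; exact hi)
  have hQ : IsFibbinary (2 ^ (s + 1) + Nat.nth IsFibbinary i) :=
    (fb_shift htlt).mpr (Nat.nth_mem_of_infinite Qinf i)
  have hc : Nat.count IsFibbinary (2 ^ (s + 1) + Nat.nth IsFibbinary i)
      = Nat.fib (s + 3) + i := by
    rw [count_add_of s _ (le_of_lt htlt), count_pow (s + 1),
      Nat.count_nth_of_infinite Qinf, show s + 1 + 2 = s + 3 from rfl]
  have h := Nat.nth_count hQ
  rwa [hc] at h

/-- `fibbin n` is the `n`-th fibbinary number, i.e. the `n`-th positive integer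
(1-indexed, in increasing order) whose binary representation has no two
consecutive ones. -/
noncomputable def fibbin (n : ℕ) : ℕ :=
  Nat.nth (fun m => 0 < m ∧ IsFibbinary m) (n - 1)

/-- `odfib n` is the `n`-th odd fibbinary number
(1-indexed, in increasing order). -/
noncomputable def odfib (n : ℕ) : ℕ :=
  Nat.nth (fun m => Odd m ∧ IsFibbinary m) (n - 1)

/-- `Z n` is the index `j` such that the `j`-th fibbinary number equals the
`n`-th odd fibbinary number, i.e. `Z n = fibbin⁻¹ (odfib n)`. -/
noncomputable def Z (n : ℕ) : ℕ :=
  sInf {j : ℕ | 1 ≤ j ∧ fibbin j = odfib n}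

lemma odfib_eq (N : ℕ) : odfib N = 4 * Nat.nth IsFibbinary (N - 1) + 1 := by
  rw [odfib, nth_R]

lemma Z_eq (N : ℕ) (hN : 1 ≤ N) : Z N = Nat.count IsFibbinary (odfib N) := by
  have hod := odfib_eq N
  set y := odfib N with hy
  have hyfb : IsFibbinary y := by
    rw [hod]; exact fb_four.mpr (Nat.nth_mem_of_infinite Qinf _)
  have hypos : 0 < y := by omega
  have hcount1 : 1 ≤ Nat.count IsFibbinary y := by
    have := count_P y hypos; omega
  set j0 := Nat.count IsFibbinary y with hj0
  have hset : {j : ℕ | 1 ≤ j ∧ fibbin j = y} = {j0} := by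
    ext j
    simp only [Set.mem_setOf_eq, Set.mem_singleton_iff]
    constructor
    · rintro ⟨hj1, hj2⟩
      rw [fibbin, nth_P, show j - 1 + 1 = j by omega] at hj2
      have hcc : Nat.count IsFibbinary y = j := by
        rw [← hj2, Nat.count_nth_of_infinite Qinf]
      omega
    · rintro rfl
      refine ⟨hcount1, ?_⟩
      rw [fibbin, nth_P, show j0 - 1 + 1 = j0 by omega]
      exact Nat.nth_count hyfb
  rw [Z, ← hy, hset, csInf_singleton]

lemma Z_shift (s i : ℕ) (hi1 : 1 ≤ i) (hi2 : i ≤ Nat.fib (s + 3)) :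
    Z (Nat.fib (s + 4) + i) = Nat.fib (s + 6) + Z i := by
  have hqlt : Nat.nth IsFibbinary (i - 1) < 2 ^ (s + 1) :=
    nth_Q_lt_of_count (by
      rw [count_pow (s + 1), show s + 1 + 2 = s + 3 from rfl]; omega)
  have hodi := odfib_eq i
  have hodshift : odfib (Nat.fib (s + 4) + i) = 2 ^ (s + 4) + odfib i := by
    rw [odfib_eq,
      show Nat.fib (s + 4) + i - 1 = Nat.fib (s + 1 + 3) + (i - 1) by
        rw [show s + 1 + 3 = s + 4 from rfl]; omega,
      nth_Q_shift (s + 1) (i - 1) (by rw [show s + 1 + 2 = s + 3 from rfl]; omega),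
      hodi]
    have hp : (2:ℕ) ^ (s + 4) = 4 * 2 ^ (s + 1 + 1) := by ring
    omega
  have htle : odfib i ≤ 2 ^ (s + 3) := by
    rw [hodi]
    have hp : (2:ℕ) ^ (s + 3) = 4 * 2 ^ (s + 1) := by ring
    omega
  have h2 : Nat.count IsFibbinary (2 ^ (s + 4) + odfib i)
      = Nat.fib (s + 6) + Nat.count IsFibbinary (odfib i) := by
    have hco := count_add_of (s + 3) (odfib i) htle
    rw [show s + 3 + 1 = s + 4 from rfl] at hco
    rw [hco, count_pow (s + 4), show s + 4 + 2 = s + 6 from rfl]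
  rw [Z_eq _ (by omega), hodshift, h2, ← Z_eq i hi1]

/-- For `n ≥ 2` and `2 ≤ k ≤ F_{n−1}`,
`Z (F_n + k) − Z (F_n + k − 1) = Z k − Z (k − 1)`. -/
theorem Z_fib_add_sub (n k : ℕ) (hn : 2 ≤ n) (hk1 : 2 ≤ k)
    (hk2 : k ≤ Nat.fib (n - 1)) :
    (Z (Nat.fib n + k) : ℤ) - (Z (Nat.fib n + k - 1) : ℤ)
      = (Z k : ℤ) - (Z (k - 1) : ℤ) := by
  have hfib2 : 2 ≤ Nat.fib (n - 1) := le_trans hk1 hk2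
  have hn4 : 4 ≤ n := by
    by_contra h
    push_neg at h
    have hm : Nat.fib (n - 1) ≤ Nat.fib 2 := Nat.fib_mono (by omega)
    rw [Nat.fib_two] at hm
    omega
  obtain ⟨s, rfl⟩ : ∃ s, n = s + 4 := ⟨n - 4, by omega⟩
  have hk2' : k ≤ Nat.fib (s + 3) := by
    rwa [show s + 4 - 1 = s + 3 by omega] at hk2
  have e1 := Z_shift s k (by omega) hk2'
  have e2 := Z_shift s (k - 1) (by omega) (by omega)
  have esub : Nat.fib (s + 4) + k - 1 = Nat.fib (s + 4) + (k - 1) := by omega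
  rw [esub, e1, e2]
  push_cast
  ring
end

section
/- For every integer n ≥ 3 and every integer k with 2 ≤ k ≤ F_{n−1}, one has ⌊(F_n + k)·φ²⌋ − ⌊(F_n + k − 1)·φ²⌋ = ⌊k·φ²⌋ − ⌊(k − 1)·φ²⌋, where φ = (1+√5)/2 and F_m denotes the m-th Fibonacci number. -/
noncomputable def gphi : ℝ := (1 + Real.sqrt 5) / 2
noncomputable def gpsi : ℝ := (1 - Real.sqrt 5) / 2

lemma sqrt5_sq : Real.sqrt 5 * Real.sqrt 5 = 5 :=
  Real.mul_self_sqrt (by norm_num)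

lemma sqrt5_lb : (2.2 : ℝ) ≤ Real.sqrt 5 := by
  nlinarith [sqrt5_sq, Real.sqrt_nonneg 5]

lemma sqrt5_ub : Real.sqrt 5 ≤ 2.24 := by
  nlinarith [sqrt5_sq, Real.sqrt_nonneg 5]

lemma gphi_add_gpsi : gphi + gpsi = 1 := by unfold gphi gpsi; ring

lemma gphi_sub_gpsi : gphi - gpsi = Real.sqrt 5 := by unfold gphi gpsi; ring

lemma gphi_mul_gpsi : gphi * gpsi = -1 := by
  unfold gphi gpsi; nlinarith [sqrt5_sq]

lemma gphi_sq : gphi ^ 2 = gphi + 1 := by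
  unfold gphi; nlinarith [sqrt5_sq]

lemma gpsi_sq : gpsi ^ 2 = gpsi + 1 := by
  unfold gpsi; nlinarith [sqrt5_sq]

lemma abs_gpsi : |gpsi| = (Real.sqrt 5 - 1) / 2 := by
  rw [abs_of_nonpos]
  · unfold gpsi; ring
  · unfold gpsi; nlinarith [sqrt5_lb]

lemma abs_gpsi_le : |gpsi| ≤ 0.62 := by
  rw [abs_gpsi]; nlinarith [sqrt5_ub]

lemma gphi_mul_abs_gpsi : gphi * |gpsi| = 1 := by
  rw [abs_gpsi]; unfold gphi; nlinarith [sqrt5_sq]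

lemma gphi_pos : 0 < gphi := by unfold gphi; nlinarith [sqrt5_lb]

/-- Binet -/
lemma binet (m : ℕ) : Real.sqrt 5 * (Nat.fib m : ℝ) = gphi ^ m - gpsi ^ m := by
  induction m using Nat.twoStepInduction with
  | zero => simp
  | one => simp [gphi_sub_gpsi]
  | more m ih1 ih2 =>
    rw [Nat.fib_add_two]
    push_cast
    rw [mul_add, ih1, ih2]
    have h1 : gphi ^ (m + 2) = gphi ^ m * (gphi + 1) := by rw [← gphi_sq]; ring
    have h2 : gpsi ^ (m + 2) = gpsi ^ m * (gpsi + 1) := by rw [← gpsi_sq]; ring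
    rw [h1, h2]; ring

lemma fib_mul_gphi (m : ℕ) : (Nat.fib m : ℝ) * gphi = (Nat.fib (m+1) : ℝ) - gpsi ^ m := by
  have h5 : (0:ℝ) < Real.sqrt 5 := by nlinarith [sqrt5_lb]
  have hb1 := binet m
  have hb2 := binet (m+1)
  have hps : gpsi + Real.sqrt 5 = gphi := by unfold gphi gpsi; ring
  have : Real.sqrt 5 * ((Nat.fib m : ℝ) * gphi) =
      Real.sqrt 5 * ((Nat.fib (m+1) : ℝ) - gpsi ^ m) := by
    rw [mul_sub, ← mul_assoc, hb1, hb2]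
    rw [pow_succ, ← hps]
    ring
  exact mul_left_cancel₀ (ne_of_gt h5) this

/-- rational approximation bound for gphi -/
lemma approx (j : ℕ) (hj : 1 ≤ j) (p : ℤ) :
    1 / (Real.sqrt 5 * j + 1) ≤ |(p : ℝ) - j * gphi| := by
  have h5 : (2.2:ℝ) ≤ Real.sqrt 5 := sqrt5_lb
  have hj1 : (1:ℝ) ≤ j := by exact_mod_cast hj
  have hd : (0:ℝ) < Real.sqrt 5 * j + 1 := by nlinarith
  set A : ℝ := (p : ℝ) - j * gphi with hA
  set B : ℝ := (p : ℝ) - j * gpsi with hB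
  have hAB : A * B = ((p^2 - p*j - j^2 : ℤ) : ℝ) := by
    push_cast
    rw [hA, hB]
    linear_combination (-(p:ℝ)*(j:ℝ)) * gphi_add_gpsi + (j:ℝ)^2 * gphi_mul_gpsi
  have hirr : Irrational (Real.sqrt 5) := by
    have := (by norm_num : Nat.Prime 5).irrational_sqrt
    simpa using this
  have hne : (p^2 - p*j - j^2 : ℤ) ≠ 0 := by
    intro h0
    have : A * B = 0 := by rw [hAB, h0]; norm_num
    have hjne : (j:ℝ) ≠ 0 := by positivity
    rcases mul_eq_zero.mp this with h | h
    · rw [hA] at h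
      unfold gphi at h
      refine absurd ?_ ((irrational_iff_ne_rational _).mp hirr (2*p - j) j (by exact_mod_cast hjne))
      push_cast
      rw [eq_div_iff hjne]
      linear_combination (-2) * h
    · rw [hB] at h
      unfold gpsi at h
      refine absurd ?_ ((irrational_iff_ne_rational _).mp hirr (j - 2*p) j (by exact_mod_cast hjne))
      push_cast
      rw [eq_div_iff hjne]
      linear_combination 2 * h
  have hone : (1:ℝ) ≤ |A * B| := by
    rw [hAB]
    exact_mod_cast Int.one_le_abs hne
  have hBA : |B| ≤ |A| + Real.sqrt 5 * j := by
    have : B = A + j * (gphi - gpsi) := by rw [hA, hB]; ring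
    rw [this, gphi_sub_gpsi]
    have habs : |(j:ℝ) * Real.sqrt 5| = Real.sqrt 5 * j := by
      rw [abs_of_nonneg (by positivity)]; ring
    calc |A + j * Real.sqrt 5| ≤ |A| + |(j:ℝ) * Real.sqrt 5| := abs_add_le _ _
    _ = |A| + Real.sqrt 5 * j := by rw [habs]
  by_contra hcon
  push_neg at hcon
  have hAlt : |A| < 1 / (Real.sqrt 5 * j + 1) := hcon
  have hA1 : |A| < 1 := lt_of_lt_of_le hAlt (by rw [div_le_one hd]; nlinarith)
  have : |A| * |B| < 1 := by
    calc |A| * |B| ≤ |A| * (|A| + Real.sqrt 5 * j) := by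
          exact mul_le_mul_of_nonneg_left hBA (abs_nonneg A)
    _ < (1 / (Real.sqrt 5 * j + 1)) * (1 + Real.sqrt 5 * j) := by
        apply mul_lt_mul' (le_of_lt hAlt) _ _ (by positivity)
        · nlinarith [abs_nonneg A]
        · positivity
    _ = 1 := by field_simp; ring
  rw [← abs_mul] at this
  linarith [hone]

lemma bound (n j : ℕ) (hn : 3 ≤ n) (hj2 : j ≤ Nat.fib (n-1)) :
    |gpsi| ^ n * (Real.sqrt 5 * j + 1) < 1 := by
  have hps : (0:ℝ) ≤ |gpsi| := abs_nonneg _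
  have hpsle : |gpsi| ≤ 0.62 := abs_gpsi_le
  have h5 : (0:ℝ) < Real.sqrt 5 := by nlinarith [sqrt5_lb]
  have hjf : (j : ℝ) ≤ (Nat.fib (n-1) : ℝ) := by exact_mod_cast hj2
  have key : Real.sqrt 5 * (Nat.fib (n-1) : ℝ) = gphi ^ (n-1) - gpsi ^ (n-1) := binet _
  -- |ψ|^n * √5 * fib(n-1) ≤ |ψ| + |ψ|^(2n-1)
  have habs : |gpsi ^ (n-1)| = |gpsi| ^ (n-1) := abs_pow _ _
  have h1 : |gpsi| ^ n * (gphi ^ (n-1)) = |gpsi| := by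
    have hn1 : n = (n-1) + 1 := by omega
    rw [hn1]
    rw [pow_succ]
    calc |gpsi| ^ (n-1) * |gpsi| * gphi ^ (n-1)
        = (|gpsi| * gphi) ^ (n-1) * |gpsi| := by rw [mul_pow]; ring
      _ = |gpsi| := by rw [mul_comm |gpsi| gphi, gphi_mul_abs_gpsi, one_pow, one_mul]
  have h2 : |gpsi| ^ n * |gpsi ^ (n-1)| = |gpsi| ^ (2*n - 1) := by
    rw [habs, ← pow_add]
    congr 1
    omega
  have hlt1 : |gpsi| < 1 := by nlinarith
  have h3 : |gpsi| ^ (2*n - 1) ≤ |gpsi| ^ 5 :=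
    pow_le_pow_of_le_one hps (le_of_lt hlt1) (by omega)
  have h4 : |gpsi| ^ n ≤ |gpsi| ^ 3 :=
    pow_le_pow_of_le_one hps (le_of_lt hlt1) hn
  have hfib : |gpsi| ^ n * (Real.sqrt 5 * (Nat.fib (n-1) : ℝ)) ≤ |gpsi| + |gpsi| ^ 5 := by
    rw [key]
    have : |gpsi| ^ n * (gphi ^ (n-1) - gpsi ^ (n-1)) ≤
        |gpsi| ^ n * gphi ^ (n-1) + |gpsi| ^ n * |gpsi ^ (n-1)| := by
      have := neg_abs_le (gpsi ^ (n-1))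
      have hpow : (0:ℝ) ≤ |gpsi| ^ n := by positivity
      nlinarith
    rw [h1, h2] at this
    linarith
  have hmono : |gpsi| ^ n * (Real.sqrt 5 * (j:ℝ)) ≤ |gpsi| ^ n * (Real.sqrt 5 * (Nat.fib (n-1) : ℝ)) := by
    have h0 : (0:ℝ) ≤ |gpsi| ^ n := by positivity
    exact mul_le_mul_of_nonneg_left (mul_le_mul_of_nonneg_left hjf (le_of_lt h5)) h0
  have hfinal : |gpsi| ^ n * (Real.sqrt 5 * j + 1) ≤ |gpsi| + |gpsi| ^ 5 + |gpsi| ^ 3 := by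
    rw [mul_add, mul_one]
    linarith
  calc |gpsi| ^ n * (Real.sqrt 5 * j + 1) ≤ |gpsi| + |gpsi| ^ 5 + |gpsi| ^ 3 := hfinal
    _ ≤ 0.62 + 0.62^5 + 0.62^3 := by
        have h5' : |gpsi|^5 ≤ 0.62^5 := pow_le_pow_left₀ hps hpsle 5
        have h3' : |gpsi|^3 ≤ 0.62^3 := pow_le_pow_left₀ hps hpsle 3
        linarith
    _ < 1 := by norm_num

lemma shift (n j : ℕ) (hn : 3 ≤ n) (hj : 1 ≤ j) (hj2 : j ≤ Nat.fib (n-1)) :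
    ⌊((Nat.fib n : ℝ) + j) * gphi ^ 2⌋ = (Nat.fib (n+2) : ℤ) + ⌊(j:ℝ) * gphi ^ 2⌋ := by
  have key : ((Nat.fib n : ℝ) + j) * gphi ^ 2 =
      (Nat.fib (n+2) : ℝ) + ((j:ℝ) * gphi ^ 2 - gpsi ^ n) := by
    rw [add_mul, gphi_sq, mul_add, mul_one, fib_mul_gphi]
    have : (Nat.fib (n+2) : ℝ) = (Nat.fib (n+1) : ℝ) + (Nat.fib n : ℝ) := by
      rw [Nat.fib_add_two]; push_cast; ring
    rw [this]; ring
  rw [key, add_comm ((Nat.fib (n+2) : ℝ)) _,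
    show ((Nat.fib (n+2) : ℝ)) = ((Nat.fib (n+2) : ℤ) : ℝ) by push_cast; ring,
    Int.floor_add_intCast, add_comm]
  congr 1
  -- ⌊jφ² - ψ^n⌋ = ⌊jφ²⌋
  set m : ℤ := ⌊(j:ℝ) * gphi ^ 2⌋ with hm
  have hb := bound n j hn hj2
  have hd : (0:ℝ) < Real.sqrt 5 * j + 1 := by
    have : (0:ℝ) < Real.sqrt 5 := by nlinarith [sqrt5_lb]
    positivity
  have hpsibound : |gpsi ^ n| < 1 / (Real.sqrt 5 * j + 1) := by
    rw [abs_pow, lt_div_iff₀ hd]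
    exact hb
  have hfl : (m:ℝ) ≤ (j:ℝ) * gphi ^ 2 := Int.floor_le _
  have hfu : (j:ℝ) * gphi ^ 2 < m + 1 := Int.lt_floor_add_one _
  -- approximation: jφ² = j + jφ
  have hphisq : (j:ℝ) * gphi ^ 2 = (j:ℝ) + (j:ℝ) * gphi := by rw [gphi_sq]; ring
  have ha1 : 1 / (Real.sqrt 5 * j + 1) ≤ |((m - j : ℤ) : ℝ) - j * gphi| := approx j hj _
  have ha2 : 1 / (Real.sqrt 5 * j + 1) ≤ |((m + 1 - j : ℤ) : ℝ) - j * gphi| := approx j hj _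
  have he1 : ((m - j : ℤ) : ℝ) - j * gphi = (m:ℝ) - (j:ℝ) * gphi ^ 2 := by
    push_cast; rw [hphisq]; ring
  have he2 : ((m + 1 - j : ℤ) : ℝ) - j * gphi = ((m:ℝ) + 1) - (j:ℝ) * gphi ^ 2 := by
    push_cast; rw [hphisq]; ring
  rw [he1] at ha1
  rw [he2] at ha2
  have hl : 1 / (Real.sqrt 5 * j + 1) ≤ (j:ℝ) * gphi ^ 2 - m := by
    rwa [abs_of_nonpos (by linarith), neg_sub] at ha1
  have hu : 1 / (Real.sqrt 5 * j + 1) ≤ ((m:ℝ) + 1) - (j:ℝ) * gphi ^ 2 := by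
    rwa [abs_of_nonneg (by linarith)] at ha2
  have habs1 : gpsi ^ n ≤ |gpsi ^ n| := le_abs_self _
  have habs2 : -|gpsi ^ n| ≤ gpsi ^ n := neg_abs_le _
  rw [Int.floor_eq_iff]
  constructor
  · linarith
  · push_cast; linarith
  -- note: Int.floor_eq_iff needs no side condition here? check

/-- For every `n ≥ 3` and `2 ≤ k ≤ F_{n−1}`,
`⌊(F_n + k)·φ²⌋ − ⌊(F_n + k − 1)·φ²⌋ = ⌊k·φ²⌋ − ⌊(k − 1)·φ²⌋`,
where `φ = (1+√5)/2`. -/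
theorem floor_diff_phi_sq (n k : ℕ) (hn : 3 ≤ n) (hk1 : 2 ≤ k)
    (hk2 : k ≤ Nat.fib (n - 1)) :
    ⌊((Nat.fib n : ℝ) + (k : ℝ)) * ((1 + Real.sqrt 5) / 2) ^ 2⌋
      - ⌊((Nat.fib n : ℝ) + (k : ℝ) - 1) * ((1 + Real.sqrt 5) / 2) ^ 2⌋
    = ⌊(k : ℝ) * ((1 + Real.sqrt 5) / 2) ^ 2⌋
      - ⌊((k : ℝ) - 1) * ((1 + Real.sqrt 5) / 2) ^ 2⌋ := by
  have hg : ((1 + Real.sqrt 5) / 2 : ℝ) = gphi := rfl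
  rw [hg]
  have hk1' : 1 ≤ k - 1 := by omega
  have hk2' : k - 1 ≤ Nat.fib (n-1) := by omega
  have hcast : ((k - 1 : ℕ) : ℝ) = (k : ℝ) - 1 := by
    have : (1:ℕ) ≤ k := by omega
    push_cast [this]; ring
  have h1 := shift n k hn (by omega) hk2
  have h2 := shift n (k-1) hn hk1' hk2'
  rw [hcast] at h2
  have he : ((Nat.fib n : ℝ) + (k:ℝ) - 1) = ((Nat.fib n : ℝ) + ((k:ℝ) - 1)) := by ring
  rw [he, h1, h2]
  ring
end
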